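/- Let a_1,…,a_n, b_1,…,b_m, c be letters of [n]' with m,n ≥ 1. (1) If b_m < ⋯ < b_1 < c < a_1 < ⋯ < a_n in standardization order, then c a_1 ⋯ a_n b_1 ⋯ b_m ≡_k c b_1 ⋯ b_m a_1 ⋯ a_n. (2) If a_1 < ⋯ < a_n < c < b_m < ⋯ < b_1 in standardization order, then a_1 ⋯ a_n b_1 ⋯ b_m c ≡_k b_1 ⋯ b_m a_1 ⋯ a_n c. -/

import Mathlib

/- # Shifted tableaux, words, shifted Knuth equivalence, and the
     Gillespie–Levinson–Purbhoo shifted tableau crystal -/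

open scoped Classical

namespace ST

/-- A letter `i` or `i'` of the primed alphabet: `val` is `i`, `primed` tells whether it is `i'`. -/
structure PLetter where
  val : ℕ
  primed : Bool
deriving DecidableEq

/-- A word (string) in the primed alphabet. -/
abbrev Word := List PLetter

/-- A (skew) shifted filling: an `Option`-valued assignment on the grid
(rows and columns indexed from `0`); `none` means "no box". -/
abbrev Tab := ℕ → ℕ → Option PLetter

def dummy : PLetter := ⟨0, false⟩

/-- The strict order `1' < 1 < 2' < 2 < ⋯` on the primed alphabet (Bool-valued). -/
def pltb (a b : PLetter) : Bool :=
  decide (a.val < b.val) || (decide (a.val = b.val) && a.primed && !b.primed)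

/-- The strict order `1' < 1 < 2' < 2 < ⋯` on the primed alphabet. -/
def plt (a b : PLetter) : Prop := pltb a b = true

/-- The standardization order on letters-with-positions: equal primed letters are
read right-to-left, equal unprimed letters left-to-right (Bool-valued). -/
def sLTb (p q : PLetter × ℕ) : Bool :=
  pltb p.1 q.1 ||
    (decide (p.1 = q.1) &&
      ((p.1.primed && decide (q.2 < p.2)) || (!p.1.primed && decide (p.2 < q.2))))

/-- The standardization order on letters-with-positions. -/
def sLT (p q : PLetter × ℕ) : Prop := sLTb p q = true

/-- The standardization of a word: position `i` receives rank
`1 +` the number of positions standardization-smaller than it. -/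
def stdOf (w : Word) : List ℕ :=
  (List.range w.length).map (fun i =>
    ((List.range w.length).filter
      (fun j => sLTb (w.getD j dummy, j) (w.getD i dummy, i))).length + 1)

/-- The weight of a word: the number of letters equal to `v` or `v'`. -/
def wtw (w : Word) (v : ℕ) : ℕ := (w.filter (fun a => a.val == v)).length

/-- Canonical form of a string: the first occurrence of each value is unprimed. -/
def canonize (w : Word) : Word :=
  w.mapIdx (fun idx a =>
    if List.findIdx (fun x => x.val == a.val) w = idx then ⟨a.val, false⟩ else a)

/-! ## Shifted Knuth equivalence -/

/-- The Knuth moves (K1), (K2) (conditions in the standardization order, which for equal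
letters is determined by the relative positions in the pattern). -/
inductive KMoveK : Word → Word → Prop
  | K1 (x y : Word) (a b c : PLetter)
      (h1 : sLT (a, 1) (b, 0)) (h2 : sLT (b, 0) (c, 2)) :
      KMoveK (x ++ [b, a, c] ++ y) (x ++ [b, c, a] ++ y)
  | K2 (x y : Word) (a b c : PLetter)
      (h1 : sLT (a, 0) (b, 2)) (h2 : sLT (b, 2) (c, 1)) :
      KMoveK (x ++ [a, c, b] ++ y) (x ++ [c, a, b] ++ y)

/-- All shifted Knuth moves: (K1), (K2), and the initial moves (S1), (S2). -/
inductive KMove : Word → Word → Prop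
  | ofK {w v : Word} : KMoveK w v → KMove w v
  | S1 (y : Word) (a b : PLetter) : KMove (a :: b :: y) (b :: a :: y)
  | S2 (y : Word) (v : ℕ) :
      KMove (⟨v, false⟩ :: ⟨v, false⟩ :: y) (⟨v, false⟩ :: ⟨v, true⟩ :: y)

/-- Shifted Knuth equivalence of words. -/
inductive KnuthEquiv : Word → Word → Prop
  | refl (w : Word) : KnuthEquiv w w
  | move {w v : Word} : KMove w v → KnuthEquiv w v
  | symm {w v : Word} : KnuthEquiv w v → KnuthEquiv v w
  | trans {w u v : Word} : KnuthEquiv w u → KnuthEquiv u v → KnuthEquiv w v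

/-- Equivalence generated by the moves (K1) and (K2) only. -/
inductive KnuthEquivK : Word → Word → Prop
  | refl (w : Word) : KnuthEquivK w w
  | move {w v : Word} : KMoveK w v → KnuthEquivK w v
  | symm {w v : Word} : KnuthEquivK w v → KnuthEquivK v w
  | trans {w u v : Word} : KnuthEquivK w u → KnuthEquivK u v → KnuthEquivK w v

/-! ## Shifted shapes and tableaux -/

/-- A strict partition, as a strictly decreasing list of positive integers. -/
def StrictPart (l : List ℕ) : Prop := l.Chain' (· > ·) ∧ ∀ x ∈ l, 0 < x

/-- Containment of strict partitions. -/
def SubShape (mu lam : List ℕ) : Prop := ∀ k, mu.getD k 0 ≤ lam.getD k 0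

/-- The cells of the skew shifted shape `lam/mu` (`0`-indexed; row `i` is shifted `i`
units to the right). -/
def inC (lam mu : List ℕ) (i j : ℕ) : Prop :=
  i + mu.getD i 0 ≤ j ∧ j < i + lam.getD i 0

instance (lam mu : List ℕ) (i j : ℕ) : Decidable (inC lam mu i j) := by
  unfold inC; infer_instance

/-- The weight of a filling: the number of boxes filled with `v` or `v'`. -/
noncomputable def wtT (T : Tab) (v : ℕ) : ℕ := Set.ncard {p : ℕ × ℕ | ∃ b, T p.1 p.2 = some ⟨v, b⟩}

/-- `p` comes strictly before `q` in reading order (rows bottom to top,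
left to right within a row). -/
def readBef (p q : ℕ × ℕ) : Prop := q.1 < p.1 ∨ (p.1 = q.1 ∧ p.2 < q.2)

/-- `T` is a shifted semistandard tableau of shape `lam/mu` on the alphabet `[n]'`,
in canonical form: boxes exactly on the cells of `lam/mu`; values between `1` and `n`;
rows and columns weakly increase, with at most one `i'` per row (equal row-adjacent
entries are unprimed) and at most one `i` per column (equal column-adjacent entries
are primed); and the first occurrence of each value in reading order is unprimed. -/
def IsShST (lam mu : List ℕ) (n : ℕ) (T : Tab) : Prop :=
  (∀ i j, T i j ≠ none ↔ inC lam mu i j) ∧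
  (∀ i j a, T i j = some a → 1 ≤ a.val ∧ a.val ≤ n) ∧
  (∀ i j a b, T i j = some a → T i (j+1) = some b → plt a b ∨ (a = b ∧ a.primed = false)) ∧
  (∀ i j a b, T i j = some a → T (i+1) j = some b → plt a b ∨ (a = b ∧ a.primed = true)) ∧
  (∀ i j v, T i j = some ⟨v, true⟩ →
    ∃ p : ℕ × ℕ, ∃ b, readBef p (i, j) ∧ T p.1 p.2 = some ⟨v, b⟩)

/-- The Yamanouchi tableau `Y_ν`: row `i` is filled with unprimed `i`'s (rows `1`-indexed). -/
def Yam (nu : List ℕ) : Tab := fun i j =>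
  if inC nu [] i j then some ⟨i + 1, false⟩ else none

/-- The cells of `lam/mu` listed in reading order (bottom row first, left to right). -/
def readCells (lam mu : List ℕ) : List (ℕ × ℕ) :=
  ((List.range lam.length).reverse).foldr
    (fun i acc =>
      ((List.range' (i + mu.getD i 0) (lam.getD i 0 - mu.getD i 0)).map (fun j => (i, j)))
        ++ acc) []

/-- The (row) reading word of a tableau of shape `lam/mu`. -/
def readWordT (lam mu : List ℕ) (T : Tab) : Word :=
  (readCells lam mu).filterMap (fun p => T p.1 p.2)

/-- The reading word of any filling supported in the square `[0,B)²`
(rows bottom to top, left to right). -/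
def readWordB (B : ℕ) (T : Tab) : Word :=
  ((List.range B).reverse).foldr
    (fun i acc => ((List.range B).filterMap (fun j => T i j)) ++ acc) []

/-- Refill the shape `lam/mu` with a given word, in reading order. -/
def fillTab (lam mu : List ℕ) (w : Word) : Tab := fun i j =>
  if inC lam mu i j then w[(readCells lam mu).idxOf (i, j)]? else none

/-! ## Primed crystal operators (on words, then on tableaux) -/

/-- The primed lowering operator `F_i'` on words: the unique word in canonical form with
the same standardization and weight decreased by `α_i = e_i - e_{i+1}`. -/
noncomputable def FpW (i : ℕ) (w : Word) : Option Word :=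
  if h : ∃ v : Word, canonize v = v ∧ stdOf v = stdOf w ∧
      (∀ x, wtw v x =
        if x = i then wtw w x - 1 else if x = i + 1 then wtw w x + 1 else wtw w x) ∧
      1 ≤ wtw w i
  then some h.choose else none

/-- The primed raising operator `E_i'` on words. -/
noncomputable def EpW (i : ℕ) (w : Word) : Option Word :=
  if h : ∃ v : Word, canonize v = v ∧ stdOf v = stdOf w ∧
      (∀ x, wtw v x =
        if x = i then wtw w x + 1 else if x = i + 1 then wtw w x - 1 else wtw w x) ∧
      1 ≤ wtw w (i + 1)
  then some h.choose else none

/-! ## Lattice walks and the unprimed operators -/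

/-- One step of the lattice walk, for a letter of `{1',1,2',2}`. -/
def wstep (p : ℕ × ℕ) (a : PLetter) : ℕ × ℕ :=
  if p.1 = 0 ∨ p.2 = 0 then
    if a.val = 1 then (p.1 + 1, p.2) else (p.1, p.2 + 1)
  else
    if a.val = 1 then (if a.primed then (p.1 + 1, p.2) else (p.1, p.2 - 1))
    else (if a.primed then (p.1 - 1, p.2) else (p.1, p.2 + 1))

/-- The position of the lattice walk of `w` before the letter at index `k`. -/
def walkAt (w : Word) (k : ℕ) : ℕ × ℕ := (w.take k).foldl wstep (0, 0)

def l1 : PLetter := ⟨1, false⟩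
def l1p : PLetter := ⟨1, true⟩
def l2 : PLetter := ⟨2, false⟩
def l2p : PLetter := ⟨2, true⟩

/-- `w` has an `F₁`-critical substring starting at index `k`, of length `len`, and
transforming it yields `res` (`res = none` for type 5F). The five types
(patterns, locations and transformations) follow Gillespie–Levinson–Purbhoo. -/
def FcritRes (w : Word) (k len : ℕ) (res : Option Word) : Prop :=
  -- type 1F : 1(1')ᵗ2' ↦ 2'(1')ᵗ2, located at y = 0, or y = 1 with x ≥ 1
  (∃ t, (w.drop k).take len = l1 :: (List.replicate t l1p ++ [l2p]) ∧ len = t + 2 ∧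
      ((walkAt w k).2 = 0 ∨ ((walkAt w k).2 = 1 ∧ 1 ≤ (walkAt w k).1)) ∧
      res = some (w.take k ++ (l2p :: (List.replicate t l1p ++ [l2])) ++ w.drop (k + len))) ∨
  -- type 2F : 1(2)ᵗ1' ↦ 2'(2)ᵗ1, located at x = 0, or x = 1 with y ≥ 1
  (∃ t, (w.drop k).take len = l1 :: (List.replicate t l2 ++ [l1p]) ∧ len = t + 2 ∧
      ((walkAt w k).1 = 0 ∨ ((walkAt w k).1 = 1 ∧ 1 ≤ (walkAt w k).2)) ∧
      res = some (w.take k ++ (l2p :: (List.replicate t l2 ++ [l1])) ++ w.drop (k + len))) ∨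
  -- type 3F : 1 ↦ 2, located at y = 0
  ((w.drop k).take len = [l1] ∧ len = 1 ∧ (walkAt w k).2 = 0 ∧
      res = some (w.take k ++ [l2] ++ w.drop (k + 1))) ∨
  -- type 4F : 1' ↦ 2', located at x = 0
  ((w.drop k).take len = [l1p] ∧ len = 1 ∧ (walkAt w k).1 = 0 ∧
      res = some (w.take k ++ [l2p] ++ w.drop (k + 1))) ∨
  -- type 5F : a single 1 or 2' located at x = 1, y ≥ 1; the operator is undefined
  (((w.drop k).take len = [l1] ∨ (w.drop k).take len = [l2p]) ∧ len = 1 ∧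
      (walkAt w k).1 = 1 ∧ 1 ≤ (walkAt w k).2 ∧ res = none)

/-- `p = (v, k, len, res)` is a *final* `F₁`-critical substring for the word `w`:
`v` is a representative of `w`, with an `F₁`-critical substring at `k` of length `len`,
of maximal starting index, and longest among those. -/
def FinalCrit (w : Word) (p : Word × ℕ × ℕ × Option Word) : Prop :=
  canonize p.1 = w ∧ FcritRes p.1 p.2.1 p.2.2.1 p.2.2.2 ∧
  ∀ q : Word × ℕ × ℕ × Option Word,
    canonize q.1 = w → FcritRes q.1 q.2.1 q.2.2.1 q.2.2.2 →
      (q.2.1 < p.2.1 ∨ (q.2.1 = p.2.1 ∧ q.2.2.1 ≤ p.2.2.1))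

/-- The unprimed lowering operator `F₁` on words in the alphabet `{1',1,2',2}`. -/
noncomputable def F1 (w : Word) : Option Word :=
  if h : ∃ p : Word × ℕ × ℕ × Option Word, FinalCrit w p
  then h.choose.2.2.2.map canonize else none

/-- Is `a` a letter of `{i, i', i+1, (i+1)'}`? -/
def isCol (i : ℕ) (a : PLetter) : Bool := a.val == i || a.val == i + 1

/-- Relabel `{i,i+1}' → {1,2}'`. -/
def toCol (i : ℕ) (a : PLetter) : PLetter := ⟨a.val + 1 - i, a.primed⟩

/-- Relabel `{1,2}' → {i,i+1}'`. -/
def fromCol (i : ℕ) (a : PLetter) : PLetter := ⟨a.val + i - 1, a.primed⟩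

/-- The subword of letters `i, i', i+1, (i+1)'`, relabelled to the alphabet `{1,2}'`. -/
def subw (i : ℕ) (w : Word) : Word := (w.filter (isCol i)).map (toCol i)

/-- Replace, in order, the letters of colour `{i,i+1}` of the first word by
the (relabelled) letters of the second word. -/
def reinsert (i : ℕ) : Word → Word → Word
  | [], _ => []
  | a :: w, s =>
      if isCol i a then
        match s with
        | [] => a :: reinsert i w []
        | b :: s' => fromCol i b :: reinsert i w s'
      else a :: reinsert i w s

/-- The unprimed lowering operator `F_i` on words. -/
noncomputable def FW (i : ℕ) (w : Word) : Option Word :=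
  (F1 (subw i w)).map (fun s => canonize (reinsert i w s))

/-- Complementation of a word in the alphabet `{1,2}'`. -/
def compl2 (w : Word) : Word := w.map (fun a => ⟨3 - a.val, !a.primed⟩)

/-- The unprimed raising operator `E₁ = c₂ ∘ F₁ ∘ c₂` on words in `{1,2}'`. -/
noncomputable def E1 (w : Word) : Option Word :=
  (F1 (canonize (compl2 w))).map (fun u => canonize (compl2 u))

/-- The unprimed raising operator `E_i` on words. -/
noncomputable def EW (i : ℕ) (w : Word) : Option Word :=
  (E1 (subw i w)).map (fun s => canonize (reinsert i w s))

/-! ## The shifted tableau crystal `B(λ/μ, n)` -/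

/-- The unprimed lowering operator `F_i` on tableaux of shape `lam/mu`. -/
noncomputable def FT (lam mu : List ℕ) (i : ℕ) (T : Tab) : Option Tab :=
  (FW i (readWordT lam mu T)).map (fillTab lam mu)

/-- The primed lowering operator `F_i'` on tableaux of shape `lam/mu`. -/
noncomputable def FpT (lam mu : List ℕ) (i : ℕ) (T : Tab) : Option Tab :=
  (FpW i (readWordT lam mu T)).map (fillTab lam mu)

/-- The unprimed raising operator `E_i` on tableaux of shape `lam/mu`. -/
noncomputable def ET (lam mu : List ℕ) (i : ℕ) (T : Tab) : Option Tab :=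
  (EW i (readWordT lam mu T)).map (fillTab lam mu)

/-- The primed raising operator `E_i'` on tableaux of shape `lam/mu`. -/
noncomputable def EpT (lam mu : List ℕ) (i : ℕ) (T : Tab) : Option Tab :=
  (EpW i (readWordT lam mu T)).map (fillTab lam mu)

/-- An `{i,i'}`-coloured edge of the crystal (in either direction). -/
def edge (lam mu : List ℕ) (i : ℕ) (T U : Tab) : Prop :=
  FT lam mu i T = some U ∨ FpT lam mu i T = some U ∨
  FT lam mu i U = some T ∨ FpT lam mu i U = some T

/-- `T` and `U` lie in the same `i`-string. -/
def iStr (lam mu : List ℕ) (i : ℕ) : Tab → Tab → Prop :=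
  Relation.ReflTransGen (edge lam mu i)

/-- `T` and `U` lie in the same connected component of `B(λ/μ, n)`. -/
def Comp (lam mu : List ℕ) (n : ℕ) : Tab → Tab → Prop :=
  Relation.ReflTransGen (fun T U => ∃ i, 1 ≤ i ∧ i < n ∧ edge lam mu i T U)

/-- `T` and `U` lie in the same connected component of `B_{p,q}`
(edges coloured in `[p, q-1]` only). -/
def CompPQ (lam mu : List ℕ) (p q : ℕ) : Tab → Tab → Prop :=
  Relation.ReflTransGen (fun T U => ∃ i, p ≤ i ∧ i < q ∧ edge lam mu i T U)

/-- The `i`-string through `T` is collapsed: the operators `F_i` and `F_i'`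
coincide along it. -/
def CollapsedStr (lam mu : List ℕ) (i : ℕ) (T : Tab) : Prop :=
  ∀ U, iStr lam mu i T U → FT lam mu i U = FpT lam mu i U

/-- The `i`-string through `T` is separated: it consists of two `i`-labelled chains
connected by `i'`-labelled edges; equivalently, some `i'`-edge of the string
is not an `i`-edge. -/
def SeparatedStr (lam mu : List ℕ) (i : ℕ) (T : Tab) : Prop :=
  ∃ U V, iStr lam mu i T U ∧ FpT lam mu i U = some V ∧ FT lam mu i U ≠ some V

/-- Iterates of a partial operator. -/
def iterO (f : Tab → Option Tab) : ℕ → Tab → Option Tab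
  | 0, T => some T
  | k + 1, T => (iterO f k T).bind f

/-- Partial length function: the largest `k` such that the `k`-th iterate is defined. -/
noncomputable def plen (f : Tab → Option Tab) (T : Tab) : ℕ :=
  sSup {k | iterO f k T ≠ none}

/-- The total length function `φ_i(T)`: the `x`-coordinate of the endpoint of the
`i`-th lattice walk of the reading word of `T`. -/
def phiTot (lam mu : List ℕ) (i : ℕ) (T : Tab) : ℕ :=
  ((subw i (readWordT lam mu T)).foldl wstep (0, 0)).1

/-- The total length function `ε_i(T)`: the `y`-coordinate of the endpoint of the
`i`-th lattice walk of the reading word of `T`. -/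
def epsTot (lam mu : List ℕ) (i : ℕ) (T : Tab) : ℕ :=
  ((subw i (readWordT lam mu T)).foldl wstep (0, 0)).2

/-! ## The Schützenberger involution and evacuation -/

/-- Complementation of a letter within `[n]'`. -/
def compln (n : ℕ) (a : PLetter) : PLetter := ⟨n + 1 - a.val, !a.primed⟩

/-- The operator `c_n`: flip across the anti-diagonal of the ambient staircase
(of size `N`) while complementing the entries within `[n]'`. -/
def cnT (n N : ℕ) (T : Tab) : Tab := fun i j =>
  if i < N ∧ j < N then (T (N - 1 - j) (N - 1 - i)).map (compln n) else none

/-- The shifted evacuation `evac(T) = rect(c_n(T))` of a straight-shape tableau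
living inside the staircase of size `N`: the unique straight-shape shifted
semistandard tableau whose reading word is shifted Knuth equivalent to that
of `c_n(T)`. -/
noncomputable def evac (n N : ℕ) (T : Tab) : Tab :=
  Classical.epsilon (fun U => ∃ nu : List ℕ, StrictPart nu ∧ nu.headD 0 ≤ N ∧
    nu.length ≤ N ∧ IsShST nu [] n U ∧
    KnuthEquiv (canonize (readWordB N U)) (canonize (readWordB N (cnT n N T))))

/-- The characterizing properties of the Schützenberger (Lusztig) involution `η`
on `B(λ/μ, n)`: it maps the crystal to itself, intertwines `E_i, E_i', F_i, F_i'`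
with `F_{n-i}, F_{n-i}', E_{n-i}, E_{n-i}'`, and reverses the weight. -/
def EtaProps (lam mu : List ℕ) (n : ℕ) (η : Tab → Tab) : Prop :=
  ∀ T, IsShST lam mu n T →
    IsShST lam mu n (η T) ∧
    (∀ i, 1 ≤ i → i < n →
      EpT lam mu i (η T) = (FpT lam mu (n - i) T).map η ∧
      ET lam mu i (η T) = (FT lam mu (n - i) T).map η ∧
      FpT lam mu i (η T) = (EpT lam mu (n - i) T).map η ∧
      FT lam mu i (η T) = (ET lam mu (n - i) T).map η) ∧
    (∀ v, 1 ≤ v → v ≤ n → wtT (η T) v = wtT T (n + 1 - v))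

/-- The global specification of the Schützenberger involution for the alphabet `[n]'`. -/
def etaSpec (n : ℕ) (η : Tab → Tab) : Prop :=
  ∀ lam mu : List ℕ, StrictPart lam → StrictPart mu → SubShape mu lam →
    EtaProps lam mu n η

/-- The Schützenberger involution `η` for the alphabet `[n]'`
(evacuation on straight shapes, reversal on skew shapes). -/
noncomputable def eta (n : ℕ) : Tab → Tab := Classical.epsilon (etaSpec n)

/-- The subtableau `T^{p,q}` of entries with values in `[p,q]`, relabelled to `[q-p+1]'`. -/
def restrictT (p q : ℕ) (T : Tab) : Tab := fun i j =>
  (T i j).bind (fun a =>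
    if p ≤ a.val ∧ a.val ≤ q then some ⟨a.val + 1 - p, a.primed⟩ else none)

/-- The restriction `η_{p,q}` of the Schützenberger involution to the primed interval
`[p,q]'`: apply `η` (for the alphabet `[q-p+1]'`) to `T^{p,q}` and leave the other
entries unchanged. -/
noncomputable def etaPQ (p q : ℕ) (T : Tab) : Tab := fun i j =>
  match T i j with
  | none => none
  | some a =>
      if p ≤ a.val ∧ a.val ≤ q then
        (eta (q + 1 - p) (restrictT p q T) i j).map (fun b => ⟨b.val + p - 1, b.primed⟩)
      else some a

/-! ## The shifted crystal reflection operators -/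

/-- The shifted crystal reflection operator `σ_i` (as a partial operator),
with `k = ⟨wt(T), α_i⟩`. -/
noncomputable def sigmaO (lam mu : List ℕ) (i : ℕ) (T : Tab) : Option Tab :=
  let k : ℤ := (wtT T i : ℤ) - (wtT T (i + 1) : ℤ)
  if 0 < k then
    if (FpT lam mu i T).isSome then (iterO (FT lam mu i) (k - 1).toNat T).bind (FpT lam mu i)
    else (iterO (FT lam mu i) (k + 1).toNat T).bind (EpT lam mu i)
  else if k = 0 then
    if (FpT lam mu i T).isSome then (FpT lam mu i T).bind (ET lam mu i)
    else if (FT lam mu i T).isSome then (FT lam mu i T).bind (EpT lam mu i)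
    else some T
  else
    if (FpT lam mu i T).isSome then (FpT lam mu i T).bind (iterO (ET lam mu i) (-k + 1).toNat)
    else (EpT lam mu i T).bind (iterO (ET lam mu i) (-k - 1).toNat)

/-- The shifted crystal reflection operator `σ_i` on `B(λ/μ, n)`. -/
noncomputable def sigmaT (lam mu : List ℕ) (i : ℕ) (T : Tab) : Tab :=
  (sigmaO lam mu i T).getD T

/-- The longest permutation of the interval `[a,b]`, as a function. -/
def theta (a b : ℕ) (i : ℕ) : ℕ := if a ≤ i ∧ i ≤ b then a + b - i else i

section AuxBlockCommute
set_option linter.unreachableTactic false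
set_option linter.unusedTactic false
set_option linter.dupNamespace false

lemma plt_iff {a b : PLetter} : plt a b ↔
    a.val < b.val ∨ (a.val = b.val ∧ a.primed = true ∧ b.primed = false) := by
  simp [plt, pltb, Bool.or_eq_true, Bool.and_eq_true, decide_eq_true_iff,
    Bool.not_eq_true', and_assoc]

lemma sLT_char {x y : PLetter} {i j : ℕ} : sLT (x, i) (y, j) ↔
    plt x y ∨ (x = y ∧ ((x.primed = true ∧ j < i) ∨ (x.primed = false ∧ i < j))) := by
  simp [sLT, sLTb, plt, Bool.or_eq_true, Bool.and_eq_true, decide_eq_true_iff,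
    Bool.not_eq_true']

lemma plt_trans {a b c : PLetter} (h1 : plt a b) (h2 : plt b c) : plt a c := by
  rw [plt_iff] at *
  rcases h1 with h1 | ⟨e1, p1, q1⟩ <;> rcases h2 with h2 | ⟨e2, p2, q2⟩
  · exact Or.inl (h1.trans h2)
  · exact Or.inl (e2 ▸ h1)
  · exact Or.inl (e1 ▸ h2)
  · simp [q1] at p2
    
lemma plt_asymm {a b : PLetter} (h1 : plt a b) (h2 : plt b a) : False := by
  rw [plt_iff] at *
  rcases h1 with h1 | ⟨e1, p1, q1⟩ <;> rcases h2 with h2 | ⟨e2, p2, q2⟩ <;> first | omega | simp_all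

lemma plt_sLT {x y : PLetter} (h : plt x y) (i j : ℕ) : sLT (x, i) (y, j) :=
  sLT_char.mpr (Or.inl h)

lemma sLT_shift {x y : PLetter} {i j i' j' : ℕ} (h : sLT (x, i) (y, j))
    (hij : i < j) (hij' : i' < j') : sLT (x, i') (y, j') := by
  rw [sLT_char] at *
  rcases h with h | ⟨e, ⟨p, q⟩ | ⟨p, q⟩⟩
  · exact Or.inl h
  · omega
  · exact Or.inr ⟨e, Or.inr ⟨p, hij'⟩⟩

lemma sLT_shift' {x y : PLetter} {i j i' j' : ℕ} (h : sLT (x, i) (y, j))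
    (hij : j < i) (hij' : j' < i') : sLT (x, i') (y, j') := by
  rw [sLT_char] at *
  rcases h with h | ⟨e, ⟨p, q⟩ | ⟨p, q⟩⟩
  · exact Or.inl h
  · exact Or.inr ⟨e, Or.inl ⟨p, hij'⟩⟩
  · omega

lemma LT2_trans {x y z : PLetter} (h1 : sLT (x, 0) (y, 1)) (h2 : sLT (y, 0) (z, 1)) :
    sLT (x, 0) (z, 1) := by
  rw [sLT_char] at *
  rcases h1 with h1 | ⟨e1, ⟨p1, q1⟩ | ⟨p1, q1⟩⟩ <;>
    rcases h2 with h2 | ⟨e2, ⟨p2, q2⟩ | ⟨p2, q2⟩⟩ <;>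
    first
      | omega
      | (exact Or.inl (plt_trans h1 h2))
      | (subst e1; exact Or.inl h2)
      | (subst e2; exact Or.inl h1)
      | (subst e1; subst e2; simp_all)
      | (subst e1; subst e2; exact Or.inr ⟨rfl, Or.inr ⟨p1, by omega⟩⟩)

lemma GT2_trans {x y z : PLetter} (h1 : sLT (x, 1) (y, 0)) (h2 : sLT (y, 1) (z, 0)) :
    sLT (x, 1) (z, 0) := by
  rw [sLT_char] at *
  rcases h1 with h1 | ⟨e1, ⟨p1, q1⟩ | ⟨p1, q1⟩⟩ <;>
    rcases h2 with h2 | ⟨e2, ⟨p2, q2⟩ | ⟨p2, q2⟩⟩ <;>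
    first
      | omega
      | (exact Or.inl (plt_trans h1 h2))
      | (subst e1; exact Or.inl h2)
      | (subst e2; exact Or.inl h1)
      | (subst e1; subst e2; simp_all)
      | (subst e1; subst e2; exact Or.inr ⟨rfl, Or.inl ⟨p1, by omega⟩⟩)

lemma plt_of_GT2_LT2 {x y z : PLetter} (h1 : sLT (x, 1) (y, 0)) (h2 : sLT (y, 0) (z, 1)) :
    plt x z := by
  rw [sLT_char] at *
  rcases h1 with h1 | ⟨e1, ⟨p1, q1⟩ | ⟨p1, q1⟩⟩ <;>
    rcases h2 with h2 | ⟨e2, ⟨p2, q2⟩ | ⟨p2, q2⟩⟩ <;>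
    first
      | omega
      | (exact plt_trans h1 h2)
      | (subst e1; exact h2)
      | (subst e2; exact h1)
      | (subst e1; subst e2; simp_all)

lemma plt_of_LT2_GT2 {x y z : PLetter} (h1 : sLT (x, 0) (y, 1)) (h2 : sLT (y, 1) (z, 0)) :
    plt x z := by
  rw [sLT_char] at *
  rcases h1 with h1 | ⟨e1, ⟨p1, q1⟩ | ⟨p1, q1⟩⟩ <;>
    rcases h2 with h2 | ⟨e2, ⟨p2, q2⟩ | ⟨p2, q2⟩⟩ <;>
    first
      | omega
      | (exact plt_trans h1 h2)
      | (subst e1; exact h2)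
      | (subst e2; exact h1)
      | (subst e1; subst e2; simp_all)

lemma keCast {w w' v v' : Word} (h : KnuthEquivK w v) (hw : w = w') (hv : v = v') :
    KnuthEquivK w' v' := hw ▸ hv ▸ h

lemma moveK1 (pre rest : Word) (a b c : PLetter)
    (h1 : sLT (a, 1) (b, 0)) (h2 : sLT (b, 0) (c, 2)) :
    KnuthEquivK (pre ++ b :: a :: c :: rest) (pre ++ b :: c :: a :: rest) := by
  simpa using KnuthEquivK.move (KMoveK.K1 pre rest a b c h1 h2)

lemma moveK2 (pre rest : Word) (a b c : PLetter)
    (h1 : sLT (a, 0) (b, 2)) (h2 : sLT (b, 2) (c, 1)) :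
    KnuthEquivK (pre ++ a :: c :: b :: rest) (pre ++ c :: a :: b :: rest) := by
  simpa using KnuthEquivK.move (KMoveK.K2 pre rest a b c h1 h2)

/-- Bubble `x` leftwards through `as`, anchored by `p` on the left. -/
lemma bubble1 (as : Word) (pre suf : Word) (x p : PLetter)
    (hx : ∀ y ∈ p :: as, sLT (x, 1) (y, 0))
    (hA : List.Chain' (fun u v => sLT (u, 0) (v, 2)) (p :: as)) :
    KnuthEquivK (pre ++ p :: (as ++ x :: suf)) (pre ++ p :: x :: (as ++ suf)) := by
  induction as generalizing pre p with
  | nil => exact KnuthEquivK.refl _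
  | cons z as' ih =>
    have h1 : KnuthEquivK (pre ++ p :: (z :: as' ++ x :: suf))
        ((pre ++ [p]) ++ z :: (as' ++ x :: suf)) := by
      simpa using KnuthEquivK.refl (pre ++ p :: z :: (as' ++ x :: suf))
    have h2 := ih (pre ++ [p]) z
      (fun y hy => hx y (by simp at hy ⊢; tauto))
      (List.isChain_cons_cons.mp hA).2
    have h3 : KnuthEquivK (pre ++ p :: z :: x :: (as' ++ suf))
        (pre ++ p :: x :: z :: (as' ++ suf)) :=
      KnuthEquivK.symm (moveK1 pre (as' ++ suf) x p z (hx p (by simp))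
        (List.isChain_cons_cons.mp hA).1)
    have h2' : KnuthEquivK (pre ++ [p] ++ z :: (as' ++ x :: suf))
        (pre ++ p :: z :: x :: (as' ++ suf)) := keCast h2 rfl (by simp)
    exact (h1.trans h2').trans (keCast h3 rfl (by simp))

/-- Bubble `x` rightwards through `bs`, anchored by `p` on the right. -/
lemma bubble2 (bs : Word) (pre suf : Word) (x p : PLetter)
    (hx : ∀ y ∈ bs ++ [p], sLT (x, 0) (y, 2))
    (hB : List.Chain' (fun u v => sLT (v, 2) (u, 1)) (bs ++ [p])) :
    KnuthEquivK (pre ++ x :: (bs ++ p :: suf)) (pre ++ bs ++ x :: p :: suf) := by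
  induction bs generalizing pre with
  | nil => exact keCast (KnuthEquivK.refl (pre ++ x :: p :: suf)) (by simp) (by simp)
  | cons b bs' ih =>
    obtain ⟨next, t, h⟩ : ∃ next t, bs' ++ [p] = next :: t := by
      cases bs' with
      | nil => exact ⟨p, [], rfl⟩
      | cons u v => exact ⟨u, v ++ [p], rfl⟩
    have hB' : List.Chain' (fun u v => sLT (v, 2) (u, 1)) (bs' ++ [p]) := by
      rw [List.cons_append] at hB; exact (List.isChain_cons.mp hB).2
    have hhead : sLT (next, 2) (b, 1) := by
      rw [List.cons_append, h] at hB; exact (List.isChain_cons_cons.mp hB).1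
    have hnext : next ∈ (b :: bs') ++ [p] := by
      rw [List.cons_append, h]; exact List.mem_cons_of_mem _ List.mem_cons_self
    have hmv := moveK2 pre (t ++ suf) x next b (hx next hnext) hhead
    have hstep : KnuthEquivK (pre ++ x :: ((b :: bs') ++ p :: suf))
        ((pre ++ [b]) ++ x :: (bs' ++ p :: suf)) := by
      refine keCast hmv ?_ ?_ <;>
        simp [List.append_cons bs' p suf, h]
    have hih := ih (pre ++ [b])
      (fun y hy => hx y (List.mem_cons_of_mem _ hy))
      hB'
    exact hstep.trans (keCast hih rfl (by simp))

lemma block1 (bs : Word) (pre : Word) (p : PLetter) (as : Word)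
    (hA : List.Chain' (fun u v => sLT (u, 0) (v, 2)) (p :: as))
    (hB : List.Chain' (fun u v => sLT (v, 1) (u, 0)) (p :: bs))
    (hplt : ∀ b ∈ bs, ∀ a ∈ as, plt b a) :
    KnuthEquivK (pre ++ p :: (as ++ bs)) (pre ++ p :: (bs ++ as)) := by
  induction bs generalizing pre p with
  | nil => exact keCast (KnuthEquivK.refl (pre ++ p :: as)) (by simp) (by simp)
  | cons b bs' ih =>
    have hx : ∀ y ∈ p :: as, sLT (b, 1) (y, 0) := by
      intro y hy
      rcases List.mem_cons.mp hy with rfl | hy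
      · exact (List.isChain_cons.mp hB).1 b (by simp)
      · exact plt_sLT (hplt b (by simp) y hy) 1 0
    have hbub : KnuthEquivK (pre ++ p :: (as ++ b :: bs'))
        (pre ++ p :: b :: (as ++ bs')) := bubble1 as pre bs' b p hx hA
    have hA' : List.Chain' (fun u v => sLT (u, 0) (v, 2)) (b :: as) := by
      unfold List.Chain'
      rw [List.isChain_cons]
      refine ⟨fun y hy => ?_, (List.isChain_cons.mp hA).2⟩
      have : y ∈ as := List.mem_of_mem_head? hy
      exact plt_sLT (hplt b (by simp) y this) 0 2
    have hB' : List.Chain' (fun u v => sLT (v, 1) (u, 0)) (b :: bs') := by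
      rw [show (p :: b :: bs' : Word) = [p] ++ b :: bs' by rfl] at hB
      exact hB.suffix (by simp)
    have hih := ih (pre ++ [p]) b hA' hB'
      (fun u hu a ha => hplt u (by simp [hu]) a ha)
    exact hbub.trans (keCast hih (by simp) (by simp))

lemma block2 (as : Word) (pre suf : Word) (p : PLetter) (bs : Word)
    (hA : List.Chain' (fun u v => sLT (u, 0) (v, 2)) (as ++ [p]))
    (hB : List.Chain' (fun u v => sLT (v, 2) (u, 1)) (bs ++ [p]))
    (hplt : ∀ a ∈ as, ∀ b ∈ bs, plt a b) :
    KnuthEquivK (pre ++ as ++ bs ++ p :: suf) (pre ++ bs ++ as ++ p :: suf) := by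
  induction as using List.reverseRecOn generalizing suf p with
  | nil => exact keCast (KnuthEquivK.refl (pre ++ bs ++ p :: suf)) (by simp) (by simp)
  | append_singleton as' x ih =>
    have hxp : sLT (x, 0) (p, 2) := by
      have h2 : List.Chain' (fun u v => sLT (u, 0) (v, 2)) [x, p] :=
        hA.suffix ⟨as', by simp⟩
      exact (List.isChain_cons_cons.mp h2).1
    have hx : ∀ y ∈ bs ++ [p], sLT (x, 0) (y, 2) := by
      intro y hy
      rcases List.mem_append.mp hy with hy | hy
      · exact plt_sLT (hplt x (by simp) y hy) 0 2
      · simp at hy; exact hy ▸ hxp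
    have hbub := bubble2 bs (pre ++ as') suf x p hx hB
    have hA'' : List.Chain' (fun u v => sLT (u, 0) (v, 2)) (as' ++ [x]) :=
      hA.prefix ⟨[p], by simp⟩
    have hB'' : List.Chain' (fun u v => sLT (v, 2) (u, 1)) (bs ++ [x]) := by
      unfold List.Chain' at hB ⊢
      rw [List.isChain_append] at hB ⊢
      refine ⟨hB.1, by simp, fun u hu v hv => ?_⟩
      simp at hv
      subst hv
      exact plt_sLT (hplt x (by simp) u (List.mem_of_mem_getLast? hu)) 2 1
    have hih := ih (p :: suf) x hA'' hB''
      (fun a ha b hb => hplt a (by simp [ha]) b hb)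
    have hbub' : KnuthEquivK (pre ++ (as' ++ [x]) ++ bs ++ p :: suf)
        (pre ++ as' ++ bs ++ x :: p :: suf) := keCast hbub (by simp) rfl
    exact hbub'.trans (keCast hih rfl (by simp))

lemma toKE {w v : Word} (h : KnuthEquivK w v) : KnuthEquiv w v := by
  induction h with
  | refl w => exact KnuthEquiv.refl w
  | move m => exact KnuthEquiv.move (KMove.ofK m)
  | symm _ ih => exact KnuthEquiv.symm ih
  | trans _ _ ih1 ih2 => exact KnuthEquiv.trans ih1 ih2

lemma chain'_of_getD {R : PLetter → PLetter → Prop} {l : Word}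
    (h : ∀ k, k + 1 < l.length → R (l.getD k dummy) (l.getD (k + 1) dummy)) :
    List.Chain' R l := by
  unfold List.Chain'
  rw [List.isChain_iff_getElem]
  intro i hi
  have hi' : i + 1 < l.length := by omega
  have := h i hi'
  rwa [List.getD_eq_getElem _ _ (by omega), List.getD_eq_getElem _ _ hi'] at this

lemma getD_of_mem (l : Word) (a : PLetter) (h : a ∈ l) : ∃ k, ∃ hk : k < l.length, l.getD k dummy = a := by
  obtain ⟨⟨k, hk⟩, rfl⟩ := List.mem_iff_get.mp h
  exact ⟨k, hk, List.getD_eq_getElem _ _ hk⟩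

lemma getD_append_lt (l : Word) (a : PLetter) (k : ℕ) (h : k < l.length) :
    (l ++ [a]).getD k dummy = l.getD k dummy := List.getD_append _ _ _ _ h

lemma getD_append_last (l : Word) (a : PLetter) :
    (l ++ [a]).getD l.length dummy = a := by
  rw [List.getD_append_right _ _ _ _ le_rfl]; simp

end AuxBlockCommute

/-- Let `a₁,…,a_L, b₁,…,b_M, c` be letters of `[n]'` with `L, M ≥ 1`.
(1) If `b_M < ⋯ < b_1 < c < a_1 < ⋯ < a_L` in standardization order (positions taken in
the word `c a₁ ⋯ a_L b₁ ⋯ b_M`), then `c a₁ ⋯ a_L b₁ ⋯ b_M ≡_k c b₁ ⋯ b_M a₁ ⋯ a_L`.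
(2) If `a_1 < ⋯ < a_L < c < b_M < ⋯ < b_1` in standardization order (positions taken in
the word `a₁ ⋯ a_L b₁ ⋯ b_M c`), then `a₁ ⋯ a_L b₁ ⋯ b_M c ≡_k b₁ ⋯ b_M a₁ ⋯ a_L c`. -/
theorem knuth_block_commute (n : ℕ) (c : PLetter) (as bs : Word)
    (hc : 1 ≤ c.val ∧ c.val ≤ n)
    (hasn : ∀ a ∈ as, 1 ≤ a.val ∧ a.val ≤ n) (hbsn : ∀ a ∈ bs, 1 ≤ a.val ∧ a.val ≤ n)
    (hL : 1 ≤ as.length) (hM : 1 ≤ bs.length) :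
    (((∀ k, k + 1 < bs.length →
          sLT (bs.getD (k + 1) dummy, as.length + k + 2)
            (bs.getD k dummy, as.length + k + 1)) ∧
        sLT (bs.getD 0 dummy, as.length + 1) (c, 0) ∧
        sLT (c, 0) (as.getD 0 dummy, 1) ∧
        (∀ k, k + 1 < as.length →
          sLT (as.getD k dummy, k + 1) (as.getD (k + 1) dummy, k + 2))) →
      KnuthEquiv (c :: (as ++ bs)) (c :: (bs ++ as))) ∧
    (((∀ k, k + 1 < as.length →
          sLT (as.getD k dummy, k) (as.getD (k + 1) dummy, k + 1)) ∧
        sLT (as.getD (as.length - 1) dummy, as.length - 1)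
          (c, as.length + bs.length) ∧
        sLT (c, as.length + bs.length)
          (bs.getD (bs.length - 1) dummy, as.length + bs.length - 1) ∧
        (∀ k, k + 1 < bs.length →
          sLT (bs.getD (k + 1) dummy, as.length + k + 1)
            (bs.getD k dummy, as.length + k))) →
      KnuthEquiv (as ++ bs ++ [c]) (bs ++ as ++ [c])) := by
  constructor
  · rintro ⟨h1, h2, h3, h4⟩
    have hGT : ∀ k, k < bs.length → sLT (bs.getD k dummy, 1) (c, 0) := by
      intro k
      induction k with
      | zero => exact fun _ => sLT_shift' h2 (by omega) (by omega)
      | succ m ih =>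
        exact fun hk => GT2_trans (sLT_shift' (h1 m hk) (by omega) (by omega)) (ih (by omega))
    have hLT : ∀ j, j < as.length → sLT (c, 0) (as.getD j dummy, 1) := by
      intro j
      induction j with
      | zero => exact fun _ => h3
      | succ m ih =>
        exact fun hj => LT2_trans (ih (by omega)) (sLT_shift (h4 m hj) (by omega) (by omega))
    have hba : ∀ b ∈ bs, ∀ a ∈ as, plt b a := by
      intro b hb a ha
      obtain ⟨k, hk, rfl⟩ := getD_of_mem bs b hb
      obtain ⟨j, hj, rfl⟩ := getD_of_mem as a ha
      exact plt_of_GT2_LT2 (hGT k hk) (hLT j hj)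
    have hA : List.Chain' (fun u v => sLT (u, 0) (v, 2)) (c :: as) := by
      apply chain'_of_getD
      intro k hk
      cases k with
      | zero =>
        simp only [List.getD_cons_zero, List.getD_cons_succ]
        exact sLT_shift h3 (by omega) (by omega)
      | succ m =>
        simp only [List.getD_cons_succ]
        exact sLT_shift (h4 m (by simpa using hk)) (by omega) (by omega)
    have hB : List.Chain' (fun u v => sLT (v, 1) (u, 0)) (c :: bs) := by
      apply chain'_of_getD
      intro k hk
      cases k with
      | zero =>
        simp only [List.getD_cons_zero, List.getD_cons_succ]
        exact sLT_shift' h2 (by omega) (by omega)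
      | succ m =>
        simp only [List.getD_cons_succ]
        exact sLT_shift' (h1 m (by simpa using hk)) (by omega) (by omega)
    exact toKE (keCast (block1 bs [] c as hA hB hba) (by simp) (by simp))
  · rintro ⟨h1, h2, h3, h4⟩
    have haC : ∀ d j, j + d = as.length - 1 → j < as.length →
        sLT (as.getD j dummy, 0) (c, 1) := by
      intro d
      induction d with
      | zero => intro j hj _
                have : j = as.length - 1 := by omega
                subst this
                exact sLT_shift h2 (by omega) (by omega)
      | succ m ih =>
        intro j hj hjL
        exact LT2_trans (sLT_shift (h1 j (by omega)) (by omega) (by omega))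
          (ih (j + 1) (by omega) (by omega))
    have hcB : ∀ d k, k + d = bs.length - 1 → k < bs.length →
        sLT (c, 1) (bs.getD k dummy, 0) := by
      intro d
      induction d with
      | zero => intro k hk _
                have : k = bs.length - 1 := by omega
                subst this
                exact sLT_shift' h3 (by omega) (by omega)
      | succ m ih =>
        intro k hk hkM
        exact GT2_trans (ih (k + 1) (by omega) (by omega))
          (sLT_shift' (h4 k (by omega)) (by omega) (by omega))
    have hab : ∀ a ∈ as, ∀ b ∈ bs, plt a b := by
      intro a ha b hb
      obtain ⟨j, hj, rfl⟩ := getD_of_mem as a ha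
      obtain ⟨k, hk, rfl⟩ := getD_of_mem bs b hb
      exact plt_of_LT2_GT2 (haC (as.length - 1 - j) j (by omega) hj)
        (hcB (bs.length - 1 - k) k (by omega) hk)
    have hA2 : List.Chain' (fun u v => sLT (u, 0) (v, 2)) (as ++ [c]) := by
      apply chain'_of_getD
      intro k hk
      simp only [List.length_append, List.length_cons, List.length_nil] at hk
      rcases lt_or_ge (k + 1) as.length with h | h
      · rw [getD_append_lt _ _ _ (by omega), getD_append_lt _ _ _ h]
        exact sLT_shift (h1 k h) (by omega) (by omega)
      · have hk1 : k + 1 = as.length := by omega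
        have hkk : k = as.length - 1 := by omega
        rw [getD_append_lt _ _ _ (by omega), hk1, getD_append_last, hkk]
        exact sLT_shift h2 (by omega) (by omega)
    have hB2 : List.Chain' (fun u v => sLT (v, 2) (u, 1)) (bs ++ [c]) := by
      apply chain'_of_getD
      intro k hk
      simp only [List.length_append, List.length_cons, List.length_nil] at hk
      rcases lt_or_ge (k + 1) bs.length with h | h
      · rw [getD_append_lt _ _ _ h, getD_append_lt _ _ _ (by omega)]
        exact sLT_shift' (h4 k h) (by omega) (by omega)
      · have hk1 : k + 1 = bs.length := by omega
        have hkk : k = bs.length - 1 := by omega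
        rw [hk1, getD_append_last, getD_append_lt _ _ _ (by omega), hkk]
        exact sLT_shift' h3 (by omega) (by omega)
    exact toKE (keCast (block2 as [] [] c bs hA2 hB2 hab) (by simp) (by simp))

end ST
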